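/- For every n ≥ 1, the Hankel determinants of C(x)=Σ c_n x^n and D(x)=Σ d_n x^n satisfy det((c_{i+j})_{0≤i,j≤n−1}) = Π_{k=0}^{n−2} s(k)^{n−1−k} and det((d_{i+j})_{0≤i,j≤n−1}) = (−1)^{n(n−1)/2} · Π_{k=0}^{n−2} s(k)^{n−1−k} (with the empty product for n = 1 equal to 1). -/

import Mathlib

open Polynomial

/-- The Thue–Morse ±1 sequence: t 0 = 1, t (2n) = t n, t (2n+1) = -t n. -/
def tmSeq : ℕ → ℤ
  | 0 => 1
  | n + 1 => if (n + 1) % 2 = 0 then tmSeq ((n + 1) / 2) else -tmSeq ((n + 1) / 2)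
decreasing_by all_goals exact Nat.div_lt_self (Nat.succ_pos n) one_lt_two

/-- Numerators of the convergents of the Thue–Morse continued fraction. -/
noncomputable def Ptm : ℕ → ℤ[X]
  | 0 => 1
  | 1 => 1
  | n + 2 => Ptm (n + 1) + C (tmSeq (n + 2)) * X * Ptm n

/-- Denominators of the convergents of the Thue–Morse continued fraction. -/
noncomputable def Qtm : ℕ → ℤ[X]
  | 0 => 1
  | 1 => 1 - X
  | n + 2 => Qtm (n + 1) + C (tmSeq (n + 2)) * X * Qtm n

open Polynomial

/-- The period-doubling ±1 sequence: s (2n) = 1, s (2n+1) = -s n. -/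
def pdSeq : ℕ → ℤ
  | 0 => 1
  | n + 1 => if (n + 1) % 2 = 0 then 1 else -pdSeq ((n + 1) / 2)
decreasing_by exact Nat.div_lt_self (Nat.succ_pos n) one_lt_two

/-- Numerators of the convergents of the period-doubling continued fraction. -/
noncomputable def Ppd : ℕ → ℤ[X]
  | 0 => 1
  | 1 => 1
  | n + 2 => Ppd (n + 1) + C (pdSeq (n + 2)) * X * Ppd n

/-- Denominators of the convergents of the period-doubling continued fraction. -/
noncomputable def Qpd : ℕ → ℤ[X]
  | 0 => 1
  | 1 => 1 - X
  | n + 2 => Qpd (n + 1) + C (pdSeq (n + 2)) * X * Qpd n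



noncomputable def Pgen (u : ℕ → ℤ) : ℕ → ℤ[X]
  | 0 => 1
  | 1 => 1
  | n + 2 => Pgen u (n + 1) + C (u (n + 2)) * X * Pgen u n

noncomputable def Qgen (u : ℕ → ℤ) : ℕ → ℤ[X]
  | 0 => 1
  | 1 => 1 - X
  | n + 2 => Qgen u (n + 1) + C (u (n + 2)) * X * Qgen u n

def eSeq (u : ℕ → ℤ) (n : ℕ) : ℤ := ∏ k ∈ Finset.range n, (-(u (k + 2)))

variable {u : ℕ → ℤ}

lemma Qgen_coeff_zero : ∀ n, (Qgen u n).coeff 0 = 1 := by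
  have key : ∀ n, (Qgen u n).coeff 0 = 1 ∧ (Qgen u (n + 1)).coeff 0 = 1 := by
    intro n
    induction n with
    | zero => constructor <;> simp [Qgen]
    | succ m ih =>
      refine ⟨ih.2, ?_⟩
      show (Qgen u (m + 2)).coeff 0 = 1
      rw [Qgen]
      simp [coeff_add, mul_assoc, coeff_C_mul, coeff_X_mul_zero, ih.2]
  exact fun n => (key n).1

lemma PQ_deg : ∀ n, (Pgen u (2 * n)).natDegree ≤ n ∧ (Pgen u (2 * n + 1)).natDegree ≤ n ∧
    (Qgen u (2 * n)).natDegree ≤ n ∧ (Qgen u (2 * n + 1)).natDegree ≤ n + 1 := by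
  have hstep : ∀ (c : ℤ) (p q : ℤ[X]) (a b : ℕ), p.natDegree ≤ a → q.natDegree ≤ b →
      b + 1 ≤ a → (p + C c * X * q).natDegree ≤ a := by
    intro c p q a b hp hq hab
    refine (natDegree_add_le _ _).trans (max_le hp ?_)
    calc (C c * X * q).natDegree ≤ (C c * X).natDegree + q.natDegree := natDegree_mul_le
      _ ≤ 1 + b := by
          have : (C c * X).natDegree ≤ 1 := (natDegree_C_mul_le c X).trans (by simp)
          omega
      _ ≤ a := by omega
  intro n
  induction n with
  | zero =>
    refine ⟨by simp [Pgen], by simp [Pgen], by simp [Qgen], ?_⟩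
    show (1 - X : ℤ[X]).natDegree ≤ 1
    exact (natDegree_sub_le _ _).trans (by simp)
  | succ m ih =>
    obtain ⟨h1, h2, h3, h4⟩ := ih
    have e1 : 2 * (m + 1) = (2 * m + 1) + 1 := by ring
    have e2 : 2 * (m + 1) + 1 = (2 * m + 2) + 1 := by ring
    have hP2 : (Pgen u (2 * m + 2)).natDegree ≤ m + 1 := by
      show (Pgen u (2 * m + 1) + C (u (2 * m + 2)) * X * Pgen u (2 * m)).natDegree ≤ m + 1
      exact hstep _ _ _ _ _ (h2.trans (by omega)) h1 (by omega)
    have hQ2 : (Qgen u (2 * m + 2)).natDegree ≤ m + 1 := by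
      show (Qgen u (2 * m + 1) + C (u (2 * m + 2)) * X * Qgen u (2 * m)).natDegree ≤ m + 1
      exact hstep _ _ _ _ _ h4 h3 (by omega)
    have hP3 : (Pgen u (2 * m + 3)).natDegree ≤ m + 1 := by
      show (Pgen u (2 * m + 2) + C (u (2 * m + 3)) * X * Pgen u (2 * m + 1)).natDegree ≤ m + 1
      exact hstep _ _ _ _ _ hP2 h2 (by omega)
    have hQ3 : (Qgen u (2 * m + 3)).natDegree ≤ m + 2 := by
      show (Qgen u (2 * m + 2) + C (u (2 * m + 3)) * X * Qgen u (2 * m + 1)).natDegree ≤ m + 2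
      exact hstep _ _ _ _ _ (hQ2.trans (by omega)) h4 (by omega)
    rw [e1]
    refine ⟨hP2, ?_, hQ2, ?_⟩
    · show (Pgen u (2 * m + 3)).natDegree ≤ m + 1; exact hP3
    · show (Qgen u (2 * m + 3)).natDegree ≤ m + 2; exact hQ3

lemma Pgen_lead : ∀ n, (Pgen u (2 * n)).coeff n = ∏ k ∈ Finset.range n, u (2 * k + 2) := by
  intro n
  induction n with
  | zero => simp [Pgen]
  | succ m ih =>
    have e1 : 2 * (m + 1) = (2 * m) + 2 := by ring
    rw [e1]
    show (Pgen u (2 * m + 1) + C (u (2 * m + 2)) * X * Pgen u (2 * m)).coeff (m + 1) = _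
    rw [coeff_add, mul_assoc, coeff_C_mul, coeff_X_mul,
      coeff_eq_zero_of_natDegree_lt (lt_of_le_of_lt (PQ_deg m).2.1 (by omega)), ih,
      Finset.prod_range_succ]
    ring

lemma cross_identity : ∀ n, Pgen u (n + 1) * Qgen u n - Pgen u n * Qgen u (n + 1)
    = C (eSeq u n) * X ^ (n + 1) := by
  intro n
  induction n with
  | zero => simp [Pgen, Qgen, eSeq]
  | succ m ih =>
    have hP : Pgen u (m + 2) = Pgen u (m + 1) + C (u (m + 2)) * X * Pgen u m := by rw [Pgen]
    have hQ : Qgen u (m + 2) = Qgen u (m + 1) + C (u (m + 2)) * X * Qgen u m := by rw [Qgen]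
    have he : eSeq u (m + 1) = eSeq u m * (-(u (m + 2))) := Finset.prod_range_succ _ _
    rw [hP, hQ, he]
    have : Pgen u (m + 1) * Qgen u m - Pgen u m * Qgen u (m + 1) = C (eSeq u m) * X ^ (m + 1) := ih
    push_cast [map_mul, map_neg]
    linear_combination (-(C (u (m + 2)) * X)) * this

section Series
variable (u) (f : PowerSeries ℤ)

lemma R_coeff_vanish (hf : ∀ n : ℕ, (PowerSeries.X : PowerSeries ℤ) ^ (n + 1) ∣
      f * (Qgen u n : PowerSeries ℤ) - (Pgen u n : PowerSeries ℤ))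
    (n m : ℕ) (hm : m ≤ n) :
    PowerSeries.coeff m (f * (Qgen u n : PowerSeries ℤ) - (Pgen u n : PowerSeries ℤ)) = 0 :=
  (PowerSeries.X_pow_dvd_iff.mp (hf n)) m (by omega)

lemma err_coeff (hf : ∀ n : ℕ, (PowerSeries.X : PowerSeries ℤ) ^ (n + 1) ∣
      f * (Qgen u n : PowerSeries ℤ) - (Pgen u n : PowerSeries ℤ)) (n : ℕ) :
    PowerSeries.coeff (n + 1)
      (f * (Qgen u n : PowerSeries ℤ) - (Pgen u n : PowerSeries ℤ)) = eSeq u n := by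
  set R : ℕ → PowerSeries ℤ :=
    fun n => f * (Qgen u n : PowerSeries ℤ) - (Pgen u n : PowerSeries ℤ) with hR
  have key : R n * (Qgen u (n + 1) : PowerSeries ℤ) - R (n + 1) * (Qgen u n : PowerSeries ℤ)
      = ((C (eSeq u n) * X ^ (n + 1) : ℤ[X]) : PowerSeries ℤ) := by
    rw [← cross_identity]
    push_cast
    ring
  have hcoeff := congrArg (PowerSeries.coeff (n + 1)) key
  rw [map_sub] at hcoeff
  have h2 : PowerSeries.coeff (n + 1) (R (n + 1) * (Qgen u n : PowerSeries ℤ)) = 0 := by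
    rw [PowerSeries.coeff_mul]
    refine Finset.sum_eq_zero fun p hp => ?_
    have := Finset.HasAntidiagonal.mem_antidiagonal.mp hp
    rw [R_coeff_vanish u f hf (n + 1) p.1 (by omega)]
    ring
  have h1 : PowerSeries.coeff (n + 1) (R n * (Qgen u (n + 1) : PowerSeries ℤ))
      = PowerSeries.coeff (n + 1) (R n) := by
    rw [PowerSeries.coeff_mul]
    rw [Finset.sum_eq_single ((n + 1 : ℕ), (0 : ℕ))]
    · rw [Polynomial.coeff_coe, Qgen_coeff_zero, mul_one]
    · intro p hp hne
      have hmem := Finset.HasAntidiagonal.mem_antidiagonal.mp hp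
      have : p.1 ≤ n := by
        rcases Nat.lt_or_ge p.1 (n + 1) with h | h
        · omega
        · exfalso; apply hne
          have : p.1 = n + 1 := by omega
          have h2 : p.2 = 0 := by omega
          exact Prod.ext this h2
      rw [R_coeff_vanish u f hf n p.1 this]
      ring
    · intro h
      exact absurd (Finset.HasAntidiagonal.mem_antidiagonal.mpr (by simp)) h
  rw [h1, h2, sub_zero] at hcoeff
  rw [hcoeff, Polynomial.coeff_coe]
  simp [coeff_C_mul, coeff_X_pow]

end Series

section Engine
variable (u) (f : PowerSeries ℤ)

lemma Q_coe_coeff_zero_of_gt (j b : ℕ) (hb : j < b) :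
    (PowerSeries.coeff b) ((Qgen u (2 * j) : ℤ[X]) : PowerSeries ℤ) = 0 := by
  rw [Polynomial.coeff_coe]
  exact coeff_eq_zero_of_natDegree_lt (lt_of_le_of_lt (PQ_deg j).2.2.1 hb)

lemma fQ_coeff (n : ℕ) (i j : Fin n) :
    (PowerSeries.coeff ((i : ℕ) + (j : ℕ))) (f * ((Qgen u (2 * (j : ℕ)) : ℤ[X]) : PowerSeries ℤ))
      = ∑ b ∈ Finset.range ((j : ℕ) + 1),
          (PowerSeries.coeff ((i : ℕ) + b)) f * (Qgen u (2 * (j : ℕ))).coeff ((j : ℕ) - b) := by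
  rw [PowerSeries.coeff_mul, Finset.Nat.sum_antidiagonal_eq_sum_range_succ_mk]
  have hsplit : ((i : ℕ) + (j : ℕ)).succ = (i : ℕ) + ((j : ℕ) + 1) := by omega
  simp only [hsplit]
  rw [Finset.sum_range_add]
  have hzero : ∀ k ∈ Finset.range (i : ℕ),
      (PowerSeries.coeff k) f * (PowerSeries.coeff ((i : ℕ) + (j : ℕ) - k))
        ((Qgen u (2 * (j : ℕ)) : ℤ[X]) : PowerSeries ℤ) = 0 := by
    intro k hk
    rw [Finset.mem_range] at hk
    rw [Q_coe_coeff_zero_of_gt u _ _ (by omega), mul_zero]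
  rw [Finset.sum_eq_zero hzero, zero_add]
  refine Finset.sum_congr rfl fun b hb => ?_
  rw [Finset.mem_range] at hb
  have h1 : (i : ℕ) + (j : ℕ) - ((i : ℕ) + b) = (j : ℕ) - b := by omega
  rw [h1, Polynomial.coeff_coe]

lemma AB_entry (n : ℕ) (i j : Fin n) :
    ((Matrix.of fun i j : Fin n => (PowerSeries.coeff ((i : ℕ) + (j : ℕ))) f) *
      (Matrix.of fun i j : Fin n =>
        if (i : ℕ) ≤ (j : ℕ) then (Qgen u (2 * (j : ℕ))).coeff ((j : ℕ) - (i : ℕ)) else 0)) i j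
    = (PowerSeries.coeff ((i : ℕ) + (j : ℕ)))
        (f * ((Qgen u (2 * (j : ℕ)) : ℤ[X]) : PowerSeries ℤ)) := by
  rw [Matrix.mul_apply, fQ_coeff]
  have hL : ∑ k : Fin n, (Matrix.of fun i j : Fin n =>
        (PowerSeries.coeff ((i : ℕ) + (j : ℕ))) f) i k *
      (Matrix.of fun i j : Fin n =>
        if (i : ℕ) ≤ (j : ℕ) then (Qgen u (2 * (j : ℕ))).coeff ((j : ℕ) - (i : ℕ)) else 0) k j
      = ∑ k ∈ Finset.range n, (PowerSeries.coeff ((i : ℕ) + k)) f *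
          (if k ≤ (j : ℕ) then (Qgen u (2 * (j : ℕ))).coeff ((j : ℕ) - k) else 0) := by
    exact Fin.sum_univ_eq_sum_range (fun k => (PowerSeries.coeff ((i : ℕ) + k)) f *
      (if k ≤ (j : ℕ) then (Qgen u (2 * (j : ℕ))).coeff ((j : ℕ) - k) else 0)) n
  rw [hL]
  rw [← Finset.sum_subset (Finset.range_subset_range.mpr (show (j : ℕ) + 1 ≤ n by omega))]
  · refine Finset.sum_congr rfl fun b hb => ?_
    rw [Finset.mem_range] at hb
    rw [if_pos (by omega)]
  · intro k _ hk
    rw [Finset.mem_range, not_lt] at hk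
    rw [if_neg (by omega), mul_zero]
end Engine

theorem engine (u : ℕ → ℤ) (f : PowerSeries ℤ)
    (hf : ∀ n : ℕ, (PowerSeries.X : PowerSeries ℤ) ^ (n + 1) ∣
      f * (Qgen u n : PowerSeries ℤ) - (Pgen u n : PowerSeries ℤ)) (m : ℕ) :
    (Matrix.of fun i j : Fin (m + 1) =>
        PowerSeries.coeff ((i : ℕ) + (j : ℕ)) f).det
      = (-1) ^ m * ((∏ i ∈ Finset.range m, eSeq u (2 * i)) *
          ∏ k ∈ Finset.range m, u (2 * k + 2)) := by
  set A : Matrix (Fin (m + 1)) (Fin (m + 1)) ℤ :=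
    Matrix.of fun i j : Fin (m + 1) => PowerSeries.coeff ((i : ℕ) + (j : ℕ)) f with hA
  set B : Matrix (Fin (m + 1)) (Fin (m + 1)) ℤ :=
    Matrix.of fun i j : Fin (m + 1) =>
      if (i : ℕ) ≤ (j : ℕ) then (Qgen u (2 * (j : ℕ))).coeff ((j : ℕ) - (i : ℕ)) else 0 with hB
  -- det B = 1
  have hBtri : B.BlockTriangular id := by
    intro i j hij
    have : ¬ ((i : ℕ) ≤ (j : ℕ)) := by
      simp only [id] at hij
      exact not_le.mpr hij
    show B i j = 0
    rw [hB]
    simp only [Matrix.of_apply]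
    rw [if_neg this]
  have hBdet : B.det = 1 := by
    rw [Matrix.det_of_upperTriangular hBtri]
    refine Finset.prod_eq_one fun i _ => ?_
    simp [hB, Matrix.of_apply, Qgen_coeff_zero]
  -- the entries of f * Q as sums of coeffs
  have hcoeff_split : ∀ (a j : ℕ),
      (PowerSeries.coeff a) (f * ((Qgen u (2 * j) : ℤ[X]) : PowerSeries ℤ))
        = (PowerSeries.coeff a) (f * (Qgen u (2 * j) : PowerSeries ℤ)
            - (Pgen u (2 * j) : PowerSeries ℤ)) + (Pgen u (2 * j)).coeff a := by
    intro a j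
    rw [map_sub, Polynomial.coeff_coe]
    ring
  -- the rotated matrix
  have hABentry := AB_entry u f (m + 1)
  set σ : Equiv.Perm (Fin (m + 1)) := finRotate (m + 1) with hσ
  have hMtri : ((A * B).submatrix σ id).BlockTriangular OrderDual.toDual := by
    intro i j hij
    have hij' : i < j := hij
    have hi_lt : i < Fin.last m := lt_of_lt_of_le hij' (Fin.le_last j)
    have hval : ((σ i : Fin (m + 1)) : ℕ) = (i : ℕ) + 1 := by
      rw [hσ, finRotate_succ_apply]
      exact Fin.val_add_one_of_lt hi_lt
    rw [Matrix.submatrix_apply, id, hABentry (σ i) j, hval, hcoeff_split]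
    have hijn : (i : ℕ) < (j : ℕ) := hij'
    rw [R_coeff_vanish u f hf (2 * (j : ℕ)) ((i : ℕ) + 1 + (j : ℕ)) (by omega)]
    rw [coeff_eq_zero_of_natDegree_lt (lt_of_le_of_lt (PQ_deg (j : ℕ)).1 (by omega))]
    ring
  have hMdiag : ∏ i : Fin (m + 1), ((A * B).submatrix σ id) i i
      = (∏ i ∈ Finset.range m, eSeq u (2 * i)) * ∏ k ∈ Finset.range m, u (2 * k + 2) := by
    rw [Fin.prod_univ_castSucc]
    have hlast : ((A * B).submatrix σ id) (Fin.last m) (Fin.last m)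
        = ∏ k ∈ Finset.range m, u (2 * k + 2) := by
      rw [Matrix.submatrix_apply, id, hσ, finRotate_last, hABentry 0 (Fin.last m)]
      have h0 : ((0 : Fin (m + 1)) : ℕ) = 0 := rfl
      rw [hcoeff_split]
      rw [R_coeff_vanish u f hf (2 * ((Fin.last m : Fin (m+1)) : ℕ)) _ (by simp [Fin.val_last]; omega)]
      rw [zero_add]
      simp only [Fin.val_last, h0, zero_add]
      rw [Pgen_lead]
    rw [hlast]
    congr 1
    rw [← Fin.prod_univ_eq_prod_range (fun i => eSeq u (2 * i)) m]
    refine Finset.prod_congr rfl fun i _ => ?_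
    have hcast_lt : (Fin.castSucc i) < Fin.last m := Fin.castSucc_lt_last i
    have hval : ((σ (Fin.castSucc i) : Fin (m + 1)) : ℕ) = (i : ℕ) + 1 := by
      rw [hσ, finRotate_succ_apply]
      rw [Fin.val_add_one_of_lt hcast_lt, Fin.coe_castSucc]
    rw [Matrix.submatrix_apply, id, hABentry (σ (Fin.castSucc i)) (Fin.castSucc i), hval,
      Fin.coe_castSucc, hcoeff_split]
    rw [coeff_eq_zero_of_natDegree_lt (lt_of_le_of_lt (PQ_deg (i : ℕ)).1 (by omega))]
    rw [add_zero]
    have : (i : ℕ) + 1 + (i : ℕ) = 2 * (i : ℕ) + 1 := by omega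
    rw [this]
    exact err_coeff u f hf (2 * (i : ℕ))
  have hdetsub : ((A * B).submatrix σ id).det
      = (∏ i ∈ Finset.range m, eSeq u (2 * i)) * ∏ k ∈ Finset.range m, u (2 * k + 2) := by
    rw [Matrix.det_of_lowerTriangular _ hMtri, hMdiag]
  have hperm := Matrix.det_permute σ (A * B)
  have hABdet : (A * B).det = A.det := by rw [Matrix.det_mul, hBdet, mul_one]
  rw [hdetsub, hABdet] at hperm
  simp only [hσ, sign_finRotate, Units.val_pow_eq_pow_val, Units.val_neg,
    Units.val_one] at hperm
  push_cast at hperm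
  have hm1 : ((-1 : ℤ) ^ m) * ((-1 : ℤ) ^ m) = 1 := by
    rw [← pow_add]
    exact Even.neg_one_pow ⟨m, rfl⟩
  calc A.det = ((-1 : ℤ) ^ m * (-1 : ℤ) ^ m) * A.det := by rw [hm1, one_mul]
    _ = (-1) ^ m * ((-1 : ℤ) ^ m * A.det) := by ring
    _ = (-1) ^ m * ((∏ i ∈ Finset.range m, eSeq u (2 * i)) *
          ∏ k ∈ Finset.range m, u (2 * k + 2)) := by rw [← hperm]


lemma tmSeq_zero : tmSeq 0 = 1 := by simp [tmSeq]
lemma pdSeq_zero : pdSeq 0 = 1 := by simp [pdSeq]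

lemma tmSeq_two_mul (n : ℕ) : tmSeq (2 * n) = tmSeq n := by
  cases n with
  | zero => rfl
  | succ m =>
    have h : 2 * (m + 1) = (2 * m + 1) + 1 := by ring
    rw [h, tmSeq]
    have h2 : (2 * m + 1 + 1) % 2 = 0 := by omega
    have h3 : (2 * m + 1 + 1) / 2 = m + 1 := by omega
    simp [h2, h3]

lemma tmSeq_two_mul_add_one (n : ℕ) : tmSeq (2 * n + 1) = -tmSeq n := by
  rw [tmSeq]
  have h2 : (2 * n + 1) % 2 ≠ 0 := by omega
  have h3 : (2 * n + 1) / 2 = n := by omega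
  simp [h2, h3]

lemma pdSeq_two_mul (n : ℕ) : pdSeq (2 * n) = 1 := by
  cases n with
  | zero => simpa using pdSeq_zero
  | succ m =>
    have h : 2 * (m + 1) = (2 * m + 1) + 1 := by ring
    rw [h, pdSeq]
    have h2 : (2 * m + 1 + 1) % 2 = 0 := by omega
    simp [h2]

lemma pdSeq_two_mul_add_one (n : ℕ) : pdSeq (2 * n + 1) = -pdSeq n := by
  rw [pdSeq]
  have h2 : (2 * n + 1) % 2 ≠ 0 := by omega
  have h3 : (2 * n + 1) / 2 = n := by omega
  simp [h2, h3]

lemma tmSeq_pm (n : ℕ) : tmSeq n = 1 ∨ tmSeq n = -1 := by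
  induction n using Nat.strong_induction_on with
  | _ n ih =>
    rcases Nat.even_or_odd n with ⟨m, hm⟩ | ⟨m, hm⟩
    · subst hm
      rw [← two_mul, tmSeq_two_mul]
      rcases Nat.eq_zero_or_pos m with rfl | hp
      · left; exact tmSeq_zero
      · exact ih m (by omega)
    · subst hm
      rw [tmSeq_two_mul_add_one]
      rcases ih m (by omega) with h | h <;> simp [h]

lemma pdSeq_pm (n : ℕ) : pdSeq n = 1 ∨ pdSeq n = -1 := by
  induction n using Nat.strong_induction_on with
  | _ n ih =>
    rcases Nat.even_or_odd n with ⟨m, hm⟩ | ⟨m, hm⟩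
    · subst hm; rw [← two_mul, pdSeq_two_mul]; left; rfl
    · subst hm
      rw [pdSeq_two_mul_add_one]
      rcases ih m (by omega) with h | h <;> simp [h]

lemma tmSeq_sq (n : ℕ) : tmSeq n * tmSeq n = 1 := by
  rcases tmSeq_pm n with h | h <;> simp [h]

lemma pdSeq_sq (n : ℕ) : pdSeq n * pdSeq n = 1 := by
  rcases pdSeq_pm n with h | h <;> simp [h]

lemma tm_pd_succ (n : ℕ) : tmSeq (n + 1) = -pdSeq n * tmSeq n := by
  induction n using Nat.strong_induction_on with
  | _ n ih =>
    rcases Nat.even_or_odd n with ⟨m, hm⟩ | ⟨m, hm⟩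
    · subst hm
      rw [← two_mul, tmSeq_two_mul_add_one, pdSeq_two_mul, tmSeq_two_mul]; ring
    · subst hm
      have h1 : 2 * m + 1 + 1 = 2 * (m + 1) := by ring
      rw [h1, tmSeq_two_mul, pdSeq_two_mul_add_one, tmSeq_two_mul_add_one]
      rw [ih m (by omega)]; ring

lemma prod_pd_eq (n : ℕ) : ∏ k ∈ Finset.range n, pdSeq k = (-1) ^ n * tmSeq n := by
  induction n with
  | zero => simp [tmSeq_zero]
  | succ m ih =>
    rw [Finset.prod_range_succ, ih, tm_pd_succ, pow_succ]
    ring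


lemma eT (n : ℕ) : eSeq tmSeq (2 * n) = (-1) ^ n := by
  induction n with
  | zero => simp [eSeq]
  | succ m ih =>
    have h : 2 * (m + 1) = (2 * m + 1) + 1 := by ring
    rw [h, eSeq, Finset.prod_range_succ, Finset.prod_range_succ, ← eSeq, ih]
    have h1 : 2 * m + 2 = 2 * (m + 1) := by ring
    have h2 : 2 * m + 1 + 2 = 2 * (m + 1) + 1 := by ring
    rw [h1, h2, tmSeq_two_mul, tmSeq_two_mul_add_one, pow_succ]
    linear_combination (-(-1:ℤ)^m) * tmSeq_sq (m + 1)

lemma eS (n : ℕ) : eSeq pdSeq (2 * n) = (-1) ^ n * ∏ k ∈ Finset.range n, pdSeq (k + 1) := by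
  induction n with
  | zero => simp [eSeq]
  | succ m ih =>
    have h : 2 * (m + 1) = (2 * m + 1) + 1 := by ring
    rw [h, eSeq, Finset.prod_range_succ, Finset.prod_range_succ, ← eSeq, ih]
    have h1 : 2 * m + 2 = 2 * (m + 1) := by ring
    have h2 : 2 * m + 1 + 2 = 2 * (m + 1) + 1 := by ring
    rw [h1, h2, pdSeq_two_mul, pdSeq_two_mul_add_one, pow_succ, Finset.prod_range_succ]
    ring

lemma rhs_step (m : ℕ) :
    ∏ k ∈ Finset.range (m + 1), pdSeq k ^ (m + 1 - k)
      = (∏ k ∈ Finset.range (m + 1), pdSeq k) * ∏ k ∈ Finset.range m, pdSeq k ^ (m - k) := by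
  have h1 : ∀ k ∈ Finset.range (m + 1), pdSeq k ^ (m + 1 - k) = pdSeq k * pdSeq k ^ (m - k) := by
    intro k hk
    rw [Finset.mem_range] at hk
    have : m + 1 - k = (m - k) + 1 := by omega
    rw [this, pow_succ]
    ring
  rw [Finset.prod_congr rfl h1, Finset.prod_mul_distrib]
  congr 1
  rw [Finset.prod_range_succ]
  simp

lemma tri_step (m : ℕ) : ((m + 1 + 1) * (m + 1) / 2) = (m + 1) + (m + 1) * m / 2 := by
  obtain ⟨a, ha⟩ := Nat.even_mul_succ_self m
  have h1 : (m + 1) * m = m * (m + 1) := by ring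
  have key : (m + 1 + 1) * (m + 1) = (m + 1) * m + 2 * (m + 1) := by ring
  omega

lemma finalC (m : ℕ) :
    (-1 : ℤ) ^ m * ((∏ i ∈ Finset.range m, eSeq tmSeq (2 * i)) *
        ∏ k ∈ Finset.range m, tmSeq (2 * k + 2))
      = ∏ k ∈ Finset.range m, pdSeq k ^ (m - k) := by
  induction m with
  | zero => simp
  | succ m ih =>
    rw [Finset.prod_range_succ (fun i => eSeq tmSeq (2 * i)),
      Finset.prod_range_succ (fun k => tmSeq (2 * k + 2)), eT, rhs_step,
      prod_pd_eq (m + 1), ← ih, show 2 * m + 2 = 2 * (m + 1) from by ring, tmSeq_two_mul]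
    ring

lemma finalD (m : ℕ) :
    (-1 : ℤ) ^ m * ((∏ i ∈ Finset.range m, eSeq pdSeq (2 * i)) *
        ∏ k ∈ Finset.range m, pdSeq (2 * k + 2))
      = (-1) ^ ((m + 1) * m / 2) * ∏ k ∈ Finset.range m, pdSeq k ^ (m - k) := by
  induction m with
  | zero => simp
  | succ m ih =>
    rw [rhs_step, tri_step, pow_add, Finset.prod_range_succ, Finset.prod_range_succ (fun k => pdSeq (2 * k + 2))]
    rw [eS, show 2 * m + 2 = 2 * (m + 1) from by ring, pdSeq_two_mul]
    rw [show ∏ k ∈ Finset.range (m + 1), pdSeq k = (∏ k ∈ Finset.range m, pdSeq (k + 1)) * pdSeq 0 from Finset.prod_range_succ' _ _]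
    rw [pdSeq_zero]
    linear_combination ((-1:ℤ)^(m+1) * ∏ k ∈ Finset.range m, pdSeq (k + 1)) * ih

/-- Hankel determinants of C(x) and D(x): for n ≥ 1,
H_n(C) = Π_{k=0}^{n−2} s(k)^{n−1−k} and H_n(D) = (−1)^{n(n−1)/2}·H_n(C). -/
theorem tm_pd_cf_hankel_determinants (Cx Dx : PowerSeries ℤ)
    (hC : ∀ n : ℕ, (PowerSeries.X : PowerSeries ℤ) ^ (n + 1) ∣
      Cx * (Qtm n : PowerSeries ℤ) - (Ptm n : PowerSeries ℤ))
    (hD : ∀ n : ℕ, (PowerSeries.X : PowerSeries ℤ) ^ (n + 1) ∣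
      Dx * (Qpd n : PowerSeries ℤ) - (Ppd n : PowerSeries ℤ)) :
    ∀ n : ℕ, 1 ≤ n →
      (Matrix.of fun i j : Fin n =>
          PowerSeries.coeff ((i : ℕ) + (j : ℕ)) Cx).det =
        ∏ k ∈ Finset.range (n - 1), pdSeq k ^ (n - 1 - k) ∧
      (Matrix.of fun i j : Fin n =>
          PowerSeries.coeff ((i : ℕ) + (j : ℕ)) Dx).det =
        (-1) ^ (n * (n - 1) / 2) *
          ∏ k ∈ Finset.range (n - 1), pdSeq k ^ (n - 1 - k) := by
  have Ptm_eq : ∀ n, Ptm n = Pgen tmSeq n := by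
    have key : ∀ n, Ptm n = Pgen tmSeq n ∧ Ptm (n + 1) = Pgen tmSeq (n + 1) := by
      intro n
      induction n with
      | zero => exact ⟨by rw [Ptm, Pgen], by rw [Ptm, Pgen]⟩
      | succ m ih =>
        refine ⟨ih.2, ?_⟩
        show Ptm (m + 2) = Pgen tmSeq (m + 2)
        rw [Ptm, Pgen, ih.1, ih.2]
    exact fun n => (key n).1
  have Qtm_eq : ∀ n, Qtm n = Qgen tmSeq n := by
    have key : ∀ n, Qtm n = Qgen tmSeq n ∧ Qtm (n + 1) = Qgen tmSeq (n + 1) := by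
      intro n
      induction n with
      | zero => exact ⟨by rw [Qtm, Qgen], by rw [Qtm, Qgen]⟩
      | succ m ih =>
        refine ⟨ih.2, ?_⟩
        show Qtm (m + 2) = Qgen tmSeq (m + 2)
        rw [Qtm, Qgen, ih.1, ih.2]
    exact fun n => (key n).1
  have Ppd_eq : ∀ n, Ppd n = Pgen pdSeq n := by
    have key : ∀ n, Ppd n = Pgen pdSeq n ∧ Ppd (n + 1) = Pgen pdSeq (n + 1) := by
      intro n
      induction n with
      | zero => exact ⟨by rw [Ppd, Pgen], by rw [Ppd, Pgen]⟩
      | succ m ih =>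
        refine ⟨ih.2, ?_⟩
        show Ppd (m + 2) = Pgen pdSeq (m + 2)
        rw [Ppd, Pgen, ih.1, ih.2]
    exact fun n => (key n).1
  have Qpd_eq : ∀ n, Qpd n = Qgen pdSeq n := by
    have key : ∀ n, Qpd n = Qgen pdSeq n ∧ Qpd (n + 1) = Qgen pdSeq (n + 1) := by
      intro n
      induction n with
      | zero => exact ⟨by rw [Qpd, Qgen], by rw [Qpd, Qgen]⟩
      | succ m ih =>
        refine ⟨ih.2, ?_⟩
        show Qpd (m + 2) = Qgen pdSeq (m + 2)
        rw [Qpd, Qgen, ih.1, ih.2]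
    exact fun n => (key n).1
  intro n hn
  obtain ⟨m, rfl⟩ : ∃ m, n = m + 1 := ⟨n - 1, by omega⟩
  have hfC : ∀ k : ℕ, (PowerSeries.X : PowerSeries ℤ) ^ (k + 1) ∣
      Cx * (Qgen tmSeq k : PowerSeries ℤ) - (Pgen tmSeq k : PowerSeries ℤ) := by
    intro k
    rw [← Ptm_eq, ← Qtm_eq]
    exact hC k
  have hfD : ∀ k : ℕ, (PowerSeries.X : PowerSeries ℤ) ^ (k + 1) ∣
      Dx * (Qgen pdSeq k : PowerSeries ℤ) - (Pgen pdSeq k : PowerSeries ℤ) := by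
    intro k
    rw [← Ppd_eq, ← Qpd_eq]
    exact hD k
  have hsimp : m + 1 - 1 = m := rfl
  constructor
  · rw [engine tmSeq Cx hfC m]
    simp only [hsimp]
    exact finalC m
  · rw [engine pdSeq Dx hfD m]
    simp only [hsimp]
    exact finalD m
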